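/- Let α, β, γ, δ be real numbers with α·δ − β·γ ≠ 0, and let q₁, q₂, q₃ ∈ ℝ[X] be polynomials, not all zero, having only unit common divisors. Let n := max of natDegree q₁, natDegree q₂, natDegree q₃, and for each i let Nᵢ := N_n(qᵢ) be the homogenized Möbius composite with common exponent n. Then max of natDegree N₁, natDegree N₂, natDegree N₃ equals n. -/

import Mathlib

open Polynomial

/-- The homogenized Möbius composite `N_ℓ(q)`. -/
noncomputable def Nhom (α β γ δ : ℝ) (ℓ : ℕ) (q : Polynomial ℝ) : Polynomial ℝ :=
  ∑ j ∈ Finset.range (ℓ + 1),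
    (q.coeff j) • ((C α * X + C β) ^ j * (C γ * X + C δ) ^ (ℓ - j))

open Finset

lemma lin_pow_natDegree_le (α β : ℝ) (j : ℕ) :
    ((C α * X + C β) ^ j).natDegree ≤ j := by
  simpa using natDegree_pow_le_of_le j (natDegree_linear_le (a := α) (b := β))

lemma Nhom_natDegree_le (α β γ δ : ℝ) (n : ℕ) (q : Polynomial ℝ) :
    (Nhom α β γ δ n q).natDegree ≤ n := by
  refine (natDegree_sum_le _ _).trans ?_
  rw [Finset.fold_max_le]
  refine ⟨Nat.zero_le _, fun j hj => ?_⟩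
  refine (natDegree_smul_le _ _).trans (natDegree_mul_le.trans ?_)
  have h1 := lin_pow_natDegree_le α β j
  have h2 := lin_pow_natDegree_le γ δ (n - j)
  simp only [Finset.mem_range] at hj
  omega

lemma key_coeff (α β γ δ : ℝ) (j k : ℕ) :
    ((C α * X + C β) ^ j * (C γ * X + C δ) ^ k).coeff (j + k) = α ^ j * γ ^ k := by
  rw [coeff_mul_add_eq_of_natDegree_le (lin_pow_natDegree_le α β j) (lin_pow_natDegree_le γ δ k)]
  congr 1
  · have := coeff_pow_of_natDegree_le (p := C α * X + C β) (n := 1) (m := j) natDegree_linear_le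
    simpa using this
  · have := coeff_pow_of_natDegree_le (p := C γ * X + C δ) (n := 1) (m := k) natDegree_linear_le
    simpa using this

lemma Nhom_coeff_top (α β γ δ : ℝ) (n : ℕ) (q : Polynomial ℝ) :
    (Nhom α β γ δ n q).coeff n =
      ∑ j ∈ Finset.range (n + 1), q.coeff j * (α ^ j * γ ^ (n - j)) := by
  rw [Nhom, finset_sum_coeff]
  refine Finset.sum_congr rfl fun j hj => ?_
  simp only [Finset.mem_range] at hj
  rw [coeff_smul, smul_eq_mul]
  congr 1
  obtain ⟨k, hk⟩ : ∃ k, k = n - j := ⟨_, rfl⟩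
  rw [← hk]
  have hj' : j + k = n := by omega
  rw [← hj']
  exact key_coeff α β γ δ j k

lemma Nhom_coeff_top_of_ne (α β γ δ : ℝ) (n : ℕ) (q : Polynomial ℝ)
    (hq : q.natDegree ≤ n) (hγ : γ ≠ 0) :
    (Nhom α β γ δ n q).coeff n = γ ^ n * q.eval (α / γ) := by
  rw [Nhom_coeff_top, eval_eq_sum_range' (Nat.lt_succ_of_le hq), Finset.mul_sum]
  refine Finset.sum_congr rfl fun j hj => ?_
  simp only [Finset.mem_range] at hj
  have hγn : γ ^ n = γ ^ j * γ ^ (n - j) := by rw [← pow_add]; congr 1; omega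
  rw [hγn, div_pow]
  field_simp

lemma Nhom_coeff_top_of_zero (α β δ : ℝ) (n : ℕ) (q : Polynomial ℝ) :
    (Nhom α β 0 δ n q).coeff n = q.coeff n * α ^ n := by
  rw [Nhom_coeff_top]
  rw [Finset.sum_eq_single n]
  · simp
  · intro j hj hne
    simp only [Finset.mem_range] at hj
    rw [zero_pow (by omega : n - j ≠ 0)]
    ring
  · simp

/-- For `q₁, q₂, q₃` (not all zero) with only unit common divisors and
`n = max natDegree qᵢ`, the maximal degree of the homogenized Möbius composites
`N_n(qᵢ)` is again `n`. -/
theorem stmt_9 (α β γ δ : ℝ) (h : α * δ - β * γ ≠ 0)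
    (q₁ q₂ q₃ : Polynomial ℝ) (hne : ¬(q₁ = 0 ∧ q₂ = 0 ∧ q₃ = 0))
    (hcop : ∀ d : Polynomial ℝ, d ∣ q₁ → d ∣ q₂ → d ∣ q₃ → IsUnit d)
    (n : ℕ) (hn : n = max (max q₁.natDegree q₂.natDegree) q₃.natDegree) :
    max (max (Nhom α β γ δ n q₁).natDegree (Nhom α β γ δ n q₂).natDegree)
      (Nhom α β γ δ n q₃).natDegree = n := by
  have hle1 : q₁.natDegree ≤ n := by omega
  have hle2 : q₂.natDegree ≤ n := by omega
  have hle3 : q₃.natDegree ≤ n := by omega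
  have hsuff : ∃ q, (q = q₁ ∨ q = q₂ ∨ q = q₃) ∧ (Nhom α β γ δ n q).coeff n ≠ 0 := by
    by_cases hγ : γ = 0
    · subst hγ
      have hα : α ≠ 0 := fun ha => h (by rw [ha]; ring)
      -- find a nonzero qᵢ with natDegree = n
      have hq : ∃ q, (q = q₁ ∨ q = q₂ ∨ q = q₃) ∧ q ≠ 0 ∧ q.natDegree = n := by
        rcases Nat.eq_zero_or_pos n with h0 | hpos
        · push_neg at hne
          by_cases h1 : q₁ = 0
          · by_cases h2 : q₂ = 0
            · exact ⟨q₃, Or.inr (Or.inr rfl), hne h1 h2, by omega⟩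
            · exact ⟨q₂, Or.inr (Or.inl rfl), h2, by omega⟩
          · exact ⟨q₁, Or.inl rfl, h1, by omega⟩
        · have : q₁.natDegree = n ∨ q₂.natDegree = n ∨ q₃.natDegree = n := by omega
          rcases this with h1 | h2 | h3
          · exact ⟨q₁, Or.inl rfl, fun hz => by simp [hz] at h1; omega, h1⟩
          · exact ⟨q₂, Or.inr (Or.inl rfl), fun hz => by simp [hz] at h2; omega, h2⟩
          · exact ⟨q₃, Or.inr (Or.inr rfl), fun hz => by simp [hz] at h3; omega, h3⟩
      obtain ⟨q, hmem, hqne, hdeg⟩ := hq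
      refine ⟨q, hmem, ?_⟩
      rw [Nhom_coeff_top_of_zero]
      exact mul_ne_zero (by rw [← hdeg]; exact mt leadingCoeff_eq_zero.mp hqne)
        (pow_ne_zero _ hα)
    · set c := α / γ with hc
      have hev : ¬(q₁.eval c = 0 ∧ q₂.eval c = 0 ∧ q₃.eval c = 0) := by
        rintro ⟨h1, h2, h3⟩
        have hu := hcop (X - C c) (dvd_iff_isRoot.mpr h1) (dvd_iff_isRoot.mpr h2)
          (dvd_iff_isRoot.mpr h3)
        exact Polynomial.not_isUnit_X_sub_C c hu
      push_neg at hev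
      by_cases h1 : q₁.eval c = 0
      · by_cases h2 : q₂.eval c = 0
        · refine ⟨q₃, Or.inr (Or.inr rfl), ?_⟩
          rw [Nhom_coeff_top_of_ne α β γ δ n q₃ hle3 hγ]
          exact mul_ne_zero (pow_ne_zero _ hγ) (hev h1 h2)
        · refine ⟨q₂, Or.inr (Or.inl rfl), ?_⟩
          rw [Nhom_coeff_top_of_ne α β γ δ n q₂ hle2 hγ]
          exact mul_ne_zero (pow_ne_zero _ hγ) h2
      · refine ⟨q₁, Or.inl rfl, ?_⟩
        rw [Nhom_coeff_top_of_ne α β γ δ n q₁ hle1 hγ]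
        exact mul_ne_zero (pow_ne_zero _ hγ) h1
  obtain ⟨q, hmem, hcoeff⟩ := hsuff
  have hge : n ≤ (Nhom α β γ δ n q).natDegree := le_natDegree_of_ne_zero hcoeff
  have b1 := Nhom_natDegree_le α β γ δ n q₁
  have b2 := Nhom_natDegree_le α β γ δ n q₂
  have b3 := Nhom_natDegree_le α β γ δ n q₃
  rcases hmem with rfl | rfl | rfl <;> omega
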